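/- Let K be an infinite field and V a finite-dimensional K-vector space. There is a natural isomorphism of K-algebras End_{KΣ_r}(V^{⊗r}) ≅ Sym^r(End_K(V)), where Sym^r denotes the Σ_r-invariants of the r-fold tensor power. -/

import Mathlib

set_option maxHeartbeats 1000000
set_option synthInstance.maxHeartbeats 400000

open scoped TensorProduct
open PiTensorProduct

noncomputable section SWAux

variable {K : Type*} [Field K] {M : Type*} [AddCommGroup M] [Module K M]
  {κ : Type*} [Fintype κ] [DecidableEq κ] {r : ℕ}

/-- Dual functional on the tensor power attached to a basis and a multi-index. -/
def swDualFun (b : Module.Basis κ K M) (g : Fin r → κ) : (⨂[K] _ : Fin r, M) →ₗ[K] K :=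
  PiTensorProduct.lift
    ((MultilinearMap.mkPiAlgebra K (Fin r) K).compLinearMap (fun i => b.coord (g i)))

lemma swDualFun_tprod (b : Module.Basis κ K M) (g : Fin r → κ) (v : Fin r → M) :
    swDualFun b g (PiTensorProduct.tprod K v) = ∏ i, b.coord (g i) (v i) := by
  simp [swDualFun]

lemma swDualFun_tb (b : Module.Basis κ K M) (g h : Fin r → κ) :
    swDualFun b g (PiTensorProduct.tprod K fun i => b (h i)) = if g = h then 1 else 0 := by
  rw [swDualFun_tprod]
  have : ∀ i, b.coord (g i) (b (h i)) = if g i = h i then 1 else 0 := by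
    intro i
    rw [Module.Basis.coord_apply, Module.Basis.repr_self, Finsupp.single_apply]
    simp [eq_comm]
  simp only [this]
  rw [Finset.prod_boole]
  by_cases hgh : g = h
  · simp [hgh]
  · have : ¬ ∀ i ∈ Finset.univ, g i = h i := by
      intro hall
      exact hgh (funext fun i => hall i (Finset.mem_univ i))
    simp only [hgh, if_false, this]

lemma swTb_li (b : Module.Basis κ K M) :
    LinearIndependent K (fun f : Fin r → κ => PiTensorProduct.tprod K (fun i => b (f i))) := by
  rw [Fintype.linearIndependent_iff]
  intro c hc g
  have := congrArg (swDualFun b g) hc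
  simp only [map_sum, map_smul, swDualFun_tb, smul_eq_mul, mul_ite, mul_one, mul_zero,
    Finset.sum_ite_eq, Finset.mem_univ, if_true, map_zero] at this
  simpa using this

lemma swTb_span (b : Module.Basis κ K M) :
    ⊤ ≤ Submodule.span K (Set.range (fun f : Fin r → κ => PiTensorProduct.tprod K (fun i => b (f i)))) := by
  rw [← span_tprod_eq_top (R := K) (s := fun _ : Fin r => M)]
  rw [Submodule.span_le]
  rintro _ ⟨v, rfl⟩
  have hv : (PiTensorProduct.tprod K) v
      = ∑ f : Fin r → κ, (∏ i, b.repr (v i) (f i)) • PiTensorProduct.tprod K (fun i => b (f i)) := by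
    conv_lhs => rw [show v = fun i => ∑ j, b.repr (v i) j • b j from
      funext fun i => (b.sum_repr (v i)).symm]
    rw [MultilinearMap.map_sum]
    exact Finset.sum_congr rfl fun f _ => MultilinearMap.map_smul_univ _ _ _
  rw [hv]
  exact Submodule.sum_mem _ fun f _ =>
    Submodule.smul_mem _ _ (Submodule.subset_span ⟨f, rfl⟩)

/-- Module.Basis of a tensor power from a basis of the module. -/
def swPiTensorBasis (b : Module.Basis κ K M) (r : ℕ) : Module.Basis (Fin r → κ) K (⨂[K] _ : Fin r, M) :=
  Module.Basis.mk (swTb_li b) (swTb_span b)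

lemma swPiTensorBasis_apply (b : Module.Basis κ K M) (r : ℕ) (f : Fin r → κ) :
    swPiTensorBasis b r f = PiTensorProduct.tprod K (fun i => b (f i)) := by
  simp [swPiTensorBasis, Module.Basis.mk_apply]

end SWAux

noncomputable section SWMain

variable (K : Type*) [Field K] (V : Type*) [AddCommGroup V] [Module K V]
  [FiniteDimensional K V] (r : ℕ)

/-- The natural algebra morphism `(End V)^{⊗ r} → End (V^{⊗ r})`. -/
def swPhi : (⨂[K] _ : Fin r, Module.End K V) →ₐ[K]
    Module.End K (⨂[K] _ : Fin r, V) :=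
  PiTensorProduct.liftAlgHom (R := K)
    (PiTensorProduct.mapMultilinear K (fun _ : Fin r => V) (fun _ : Fin r => V))
    (PiTensorProduct.map_one (R := K) (s := fun _ : Fin r => V))
    (fun x y => PiTensorProduct.map_mul x y)

variable {K V r}

lemma swPhi_tprod (f : Fin r → Module.End K V) (v : Fin r → V) :
    swPhi K V r (PiTensorProduct.tprod K f) (PiTensorProduct.tprod K v)
      = PiTensorProduct.tprod K (fun i => f i (v i)) := by
  simp [swPhi, PiTensorProduct.liftAlgHom]

end SWMain

noncomputable section SWMain2

variable {K : Type*} [Field K] {V : Type*} [AddCommGroup V] [Module K V]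
  [FiniteDimensional K V] {r : ℕ}

lemma swPhi_intertwine_tprod (σ : Equiv.Perm (Fin r)) (f : Fin r → Module.End K V) :
    (swPhi K V r ((PiTensorProduct.reindex K (fun _ : Fin r => Module.End K V) σ)
        (PiTensorProduct.tprod K f))) ∘ₗ
      (PiTensorProduct.reindex K (fun _ : Fin r => V) σ).toLinearMap
    = (PiTensorProduct.reindex K (fun _ : Fin r => V) σ).toLinearMap ∘ₗ
      swPhi K V r (PiTensorProduct.tprod K f) := by
  refine PiTensorProduct.ext (MultilinearMap.ext fun v => ?_)
  simp only [LinearMap.compMultilinearMap_apply, LinearMap.coe_comp, Function.comp_apply,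
    LinearEquiv.coe_coe, PiTensorProduct.reindex_tprod, swPhi_tprod]

lemma swPhi_intertwine (σ : Equiv.Perm (Fin r)) (x : ⨂[K] _ : Fin r, Module.End K V) :
    (swPhi K V r ((PiTensorProduct.reindex K (fun _ : Fin r => Module.End K V) σ) x)) ∘ₗ
      (PiTensorProduct.reindex K (fun _ : Fin r => V) σ).toLinearMap
    = (PiTensorProduct.reindex K (fun _ : Fin r => V) σ).toLinearMap ∘ₗ swPhi K V r x := by
  induction x using PiTensorProduct.induction_on with
  | smul_tprod c f =>
    simp only [map_smul, LinearMap.smul_comp, LinearMap.comp_smul]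
    rw [swPhi_intertwine_tprod]
  | add x y hx hy =>
    simp only [map_add, LinearMap.add_comp, LinearMap.comp_add, hx, hy]

lemma swPhi_surjective : Function.Surjective (swPhi K V r) := by
  classical
  intro T
  set b := Module.finBasis K V with hb
  set B := swPiTensorBasis b r with hB
  have hS : ∀ f g : Fin r → Fin (Module.finrank K V),
      swPhi K V r (PiTensorProduct.tprod K (fun i => (b.coord (g i)).smulRight (b (f i))))
        = (swDualFun b g).smulRight (B f) := by
    intro f g
    refine PiTensorProduct.ext (MultilinearMap.ext fun v => ?_)
    simp only [LinearMap.compMultilinearMap_apply, swPhi_tprod, LinearMap.smulRight_apply,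
      swDualFun_tprod, swPiTensorBasis_apply]
    rw [hB, swPiTensorBasis_apply]
    exact MultilinearMap.map_smul_univ (PiTensorProduct.tprod K)
      (fun i => b.coord (g i) (v i)) (fun i => b (f i))
  refine ⟨∑ f : Fin r → Fin (Module.finrank K V), ∑ g : Fin r → Fin (Module.finrank K V),
    (B.repr (T (B g)) f) •
      PiTensorProduct.tprod K (fun i => (b.coord (g i)).smulRight (b (f i))), ?_⟩
  rw [map_sum]
  simp_rw [map_sum, map_smul, hS]
  refine (B.ext fun h => ?_).symm
  simp only [LinearMap.coe_sum, Finset.sum_apply, LinearMap.smul_apply,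
    LinearMap.smulRight_apply]
  have hφ : ∀ g, swDualFun b g (B h) = if g = h then (1:K) else 0 := by
    intro g; rw [hB, swPiTensorBasis_apply]; exact swDualFun_tb b g h
  simp only [hφ, ite_smul, one_smul, zero_smul, smul_ite, smul_zero,
    Finset.sum_ite_eq', Finset.mem_univ, if_true]
  exact (B.sum_repr (T (B h))).symm

lemma swPhi_bijective : Function.Bijective (swPhi K V r) := by
  classical
  set b := Module.finBasis K V
  set B := swPiTensorBasis b r
  haveI : Module.Finite K (⨂[K] _ : Fin r, V) := Module.Finite.of_basis B
  haveI : Module.Free K (⨂[K] _ : Fin r, V) := Module.Free.of_basis B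
  set bE := Module.finBasis K (Module.End K V)
  set BE := swPiTensorBasis bE r
  haveI : Module.Finite K (⨂[K] _ : Fin r, Module.End K V) := Module.Finite.of_basis BE
  have h1 : Module.finrank K (⨂[K] _ : Fin r, V) = Module.finrank K V ^ r := by
    rw [Module.finrank_eq_card_basis B, Fintype.card_fun, Fintype.card_fin, Fintype.card_fin]
  have h2 : Module.finrank K (⨂[K] _ : Fin r, Module.End K V)
      = (Module.finrank K V * Module.finrank K V) ^ r := by
    rw [Module.finrank_eq_card_basis BE, Fintype.card_fun, Fintype.card_fin, Fintype.card_fin,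
      Module.finrank_linearMap]
  have hfr : Module.finrank K (⨂[K] _ : Fin r, Module.End K V)
      = Module.finrank K (Module.End K (⨂[K] _ : Fin r, V)) := by
    rw [h2, Module.finrank_linearMap, h1, mul_pow]
  exact ⟨(LinearMap.injective_iff_surjective_of_finrank_eq_finrank hfr).mpr swPhi_surjective,
    swPhi_surjective⟩

end SWMain2

/-- For a finite-dimensional vector space `V` over an infinite field `K`, the algebra
`End_{KΣ_r}(V^{⊗r})` of endomorphisms of `V^{⊗r}` commuting with the place-permutation
action of `Σ_r` is isomorphic, as a `K`-algebra, to `Sym^r(End_K V)`, the `Σ_r`-invariants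
of the `r`-th tensor power of the algebra `End_K V`. -/
theorem stmt_3 (K : Type*) [Field K] [Infinite K]
    (V : Type*) [AddCommGroup V] [Module K V] [FiniteDimensional K V] (r : ℕ) :
    ∃ e : ↥(Subalgebra.centralizer K
            (Set.range fun σ : Equiv.Perm (Fin r) =>
              ((PiTensorProduct.reindex K (fun _ : Fin r => V) σ).toLinearMap :
                Module.End K (PiTensorProduct K (fun _ : Fin r => V))))) ≃ₗ[K]
          ↥(⨅ σ : Equiv.Perm (Fin r),
            LinearMap.eqLocus
              ((PiTensorProduct.reindex K (fun _ : Fin r => Module.End K V) σ).toLinearMap)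
              (LinearMap.id)),
      ((e 1 : PiTensorProduct K (fun _ : Fin r => Module.End K V)) = 1) ∧
      ∀ x y, ((e (x * y) : PiTensorProduct K (fun _ : Fin r => Module.End K V))
          = (e x : PiTensorProduct K (fun _ : Fin r => Module.End K V)) *
            (e y : PiTensorProduct K (fun _ : Fin r => Module.End K V))) := by
  classical
  set Φ : (⨂[K] _ : Fin r, Module.End K V) ≃ₐ[K] Module.End K (⨂[K] _ : Fin r, V) :=
    AlgEquiv.ofBijective (swPhi K V r) swPhi_bijective with hΦ
  set C := Subalgebra.centralizer K
      (Set.range fun σ : Equiv.Perm (Fin r) =>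
        ((PiTensorProduct.reindex K (fun _ : Fin r => V) σ).toLinearMap :
          Module.End K (PiTensorProduct K (fun _ : Fin r => V)))) with hC
  set I := ⨅ σ : Equiv.Perm (Fin r),
      LinearMap.eqLocus
        ((PiTensorProduct.reindex K (fun _ : Fin r => Module.End K V) σ).toLinearMap)
        (LinearMap.id) with hI
  have hImem : ∀ x : ⨂[K] _ : Fin r, Module.End K V,
      x ∈ I ↔ ∀ σ : Equiv.Perm (Fin r),
        PiTensorProduct.reindex K (fun _ : Fin r => Module.End K V) σ x = x := by
    intro x
    simp [hI, Submodule.mem_iInf, LinearMap.mem_eqLocus]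
  have key : ∀ x : ⨂[K] _ : Fin r, Module.End K V,
      (∀ σ : Equiv.Perm (Fin r),
          PiTensorProduct.reindex K (fun _ : Fin r => Module.End K V) σ x = x)
        ↔ swPhi K V r x ∈ C := by
    intro x
    rw [hC, Subalgebra.mem_centralizer_iff]
    constructor
    · rintro hx _ ⟨σ, rfl⟩
      have h := swPhi_intertwine σ x
      rw [hx σ] at h
      exact h.symm
    · intro hT σ
      have h := swPhi_intertwine σ x
      have h2 : (PiTensorProduct.reindex K (fun _ : Fin r => V) σ).toLinearMap ∘ₗ swPhi K V r x
          = swPhi K V r x ∘ₗ (PiTensorProduct.reindex K (fun _ : Fin r => V) σ).toLinearMap :=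
        hT _ ⟨σ, rfl⟩
      rw [h2] at h
      have h3 : swPhi K V r
          (PiTensorProduct.reindex K (fun _ : Fin r => Module.End K V) σ x) = swPhi K V r x := by
        refine LinearMap.ext fun y => ?_
        have := LinearMap.congr_fun h
          ((PiTensorProduct.reindex K (fun _ : Fin r => V) σ).symm y)
        simpa only [LinearMap.coe_comp, Function.comp_apply, LinearEquiv.coe_coe,
          LinearEquiv.apply_symm_apply] using this
      exact swPhi_bijective.injective h3
  have hCmem : ∀ T : C, swPhi K V r (Φ.symm (T : Module.End K (⨂[K] _ : Fin r, V)))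
      = (T : Module.End K (⨂[K] _ : Fin r, V)) := fun T => Φ.apply_symm_apply _
  refine ⟨{ toFun := fun T => ⟨Φ.symm (T : Module.End K (⨂[K] _ : Fin r, V)), ?_⟩
            map_add' := ?_
            map_smul' := ?_
            invFun := fun x => ⟨swPhi K V r (x : ⨂[K] _ : Fin r, Module.End K V), ?_⟩
            left_inv := ?_
            right_inv := ?_ }, ?_, ?_⟩
  · rw [hImem]
    rw [key]
    rw [hCmem T]
    exact T.2
  · intro a b; ext; simp
  · intro c a; ext; simp
  · rw [← key]
    exact (hImem _).mp x.2
  · intro T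
    exact Subtype.ext (hCmem T)
  · intro x
    exact Subtype.ext (Φ.symm_apply_apply _)
  · show (Φ.symm ((1 : C) : Module.End K (⨂[K] _ : Fin r, V)) :
        ⨂[K] _ : Fin r, Module.End K V) = 1
    rw [OneMemClass.coe_one]
    exact _root_.map_one Φ.symm
  · intro x y
    show (Φ.symm ((x * y : C) : Module.End K (⨂[K] _ : Fin r, V)) :
        ⨂[K] _ : Fin r, Module.End K V) = Φ.symm _ * Φ.symm _
    rw [MulMemClass.coe_mul]
    exact _root_.map_mul Φ.symm _ _
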